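/- Let M and M_U be symmetric N×N real matrices, let Θ ∈ ℝ^{K×K}, let U be differentiable at each Θ_{kl}, and suppose there exists c > 0 with |U'(Θ_{kl})| ≤ c for all k,l. Then for every T ∈ 𝒰_K(1_N/N): | ∑_{i,j,k,l} ( M_{U,ij} − U'(Θ_{kl}) M_{ij} ) T_{ik} T_{jl} | ≤ (1/N) ‖M_U‖_op + c (K²/N) ‖M‖_op, where ‖·‖_op denotes the spectral (operator) norm. In particular, for a Bernoulli SBM with M = A − E[A|Z] and M_U the matrix with entries U(A_{ij}) − E[U(A_{ij})|Z], this bounds sup over T ∈ 𝒰_K(1_N/N) of |L_U(T,Θ) − E[L_U(T,Θ)|Z]|, where L_U(T,Θ) := ∑_{i,j,k,l} D_U(A_{ij},Θ_{kl}) T_{ik}T_{jl}. -/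

import Mathlib

open Finset

/-- `𝒰_K(1_N/N)`: matrices `T ∈ ℝ^{N×K}` with nonnegative entries whose rows sum to `1/N`. -/
def UK (N K : ℕ) : Set (Matrix (Fin N) (Fin K) ℝ) :=
  {T | (∀ i k, 0 ≤ T i k) ∧ ∀ i, ∑ k, T i k = 1 / (N : ℝ)}

/-- The spectral (ℓ²→ℓ² operator) norm of a square real matrix. -/
noncomputable def opNorm {N : ℕ} (M : Matrix (Fin N) (Fin N) ℝ) : ℝ :=
  ‖Matrix.toEuclideanCLM (𝕜 := ℝ) M‖

lemma key_bound {N : ℕ} (M : Matrix (Fin N) (Fin N) ℝ) (x y : Fin N → ℝ) :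
    |∑ i, ∑ j, M i j * x j * y i| ≤
      opNorm M * ‖(WithLp.equiv 2 (Fin N → ℝ)).symm x‖ * ‖(WithLp.equiv 2 (Fin N → ℝ)).symm y‖ := by
  set X := (WithLp.equiv 2 (Fin N → ℝ)).symm x
  set Y := (WithLp.equiv 2 (Fin N → ℝ)).symm y
  have h1 : (inner ℝ Y (Matrix.toEuclideanCLM (𝕜 := ℝ) M X) : ℝ) = ∑ i, ∑ j, M i j * x j * y i := by
    rw [PiLp.inner_apply]
    congr 1
    ext i
    have : (Matrix.toEuclideanCLM (𝕜 := ℝ) M X) i = M.mulVec x i := rfl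
    rw [this]
    simp only [Matrix.mulVec, dotProduct, Finset.mul_sum, Finset.sum_mul, Y,
      WithLp.equiv_symm_apply, PiLp.toLp_apply, RCLike.inner_apply, conj_trivial]
  calc |∑ i, ∑ j, M i j * x j * y i| = |(inner ℝ Y (Matrix.toEuclideanCLM (𝕜 := ℝ) M X) : ℝ)| := by rw [h1]
    _ ≤ ‖Y‖ * ‖Matrix.toEuclideanCLM (𝕜 := ℝ) M X‖ := abs_real_inner_le_norm _ _
    _ ≤ ‖Y‖ * (opNorm M * ‖X‖) := by
        gcongr; exact (Matrix.toEuclideanCLM (𝕜 := ℝ) M).le_opNorm X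
    _ = opNorm M * ‖X‖ * ‖Y‖ := by ring

lemma norm_le_of_forall {N : ℕ} (x : Fin N → ℝ) (a : ℝ) (ha : 0 ≤ a)
    (h : ∀ i, |x i| ≤ a) :
    ‖(WithLp.equiv 2 (Fin N → ℝ)).symm x‖ ≤ Real.sqrt N * a := by
  rw [EuclideanSpace.norm_eq]
  have : Real.sqrt N * a = Real.sqrt (N * a ^ 2) := by
    rw [Real.sqrt_mul (Nat.cast_nonneg N), Real.sqrt_sq ha]
  rw [this]
  apply Real.sqrt_le_sqrt
  calc ∑ i, ‖(WithLp.equiv 2 (Fin N → ℝ)).symm x i‖ ^ 2 ≤ ∑ _i : Fin N, a ^ 2 := by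
        apply Finset.sum_le_sum
        intro i _
        have := h i
        rw [WithLp.equiv_symm_apply, PiLp.toLp_apply, Real.norm_eq_abs]
        nlinarith [abs_nonneg (x i)]
    _ = N * a ^ 2 := by simp [Finset.sum_const]

lemma quad_bound {N : ℕ} (hN : 0 < N) (M : Matrix (Fin N) (Fin N) ℝ) (x y : Fin N → ℝ)
    (hx : ∀ i, |x i| ≤ 1 / N) (hy : ∀ i, |y i| ≤ 1 / N) :
    |∑ i, ∑ j, M i j * x j * y i| ≤ opNorm M * (1 / N) := by
  have hNpos : (0 : ℝ) < N := by exact_mod_cast hN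
  have ha : (0:ℝ) ≤ 1 / N := by positivity
  have hX := norm_le_of_forall x (1/N) ha hx
  have hY := norm_le_of_forall y (1/N) ha hy
  have hop : 0 ≤ opNorm M := norm_nonneg _
  have hprod : Real.sqrt N * (1/N) * (Real.sqrt N * (1/N)) = 1 / N := by
    have : Real.sqrt N * Real.sqrt N = N := Real.mul_self_sqrt (le_of_lt hNpos)
    rw [mul_mul_mul_comm, this]
    field_simp
  calc |∑ i, ∑ j, M i j * x j * y i|
      ≤ opNorm M * ‖(WithLp.equiv 2 (Fin N → ℝ)).symm x‖ * ‖(WithLp.equiv 2 (Fin N → ℝ)).symm y‖ :=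
        key_bound M x y
    _ ≤ opNorm M * (Real.sqrt N * (1/N)) * (Real.sqrt N * (1/N)) := by
        gcongr <;> first | exact norm_nonneg _ | assumption
    _ = opNorm M * (1 / N) := by rw [mul_assoc, hprod]

/-- for symmetric `M, M_U` and `|U'(Θ_{kl})| ≤ c`, for every `T ∈ 𝒰_K(1_N/N)`,
`|∑ (M_{U,ij} − U'(Θ_{kl}) M_{ij}) T_{ik}T_{jl}| ≤ (1/N)‖M_U‖_op + c (K²/N) ‖M‖_op`. -/
theorem stmt14 (N K : ℕ) (hN : 0 < N) (hK : 0 < K)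
    (M MU : Matrix (Fin N) (Fin N) ℝ)
    (hM : M.IsSymm) (hMU : MU.IsSymm)
    (Θ : Matrix (Fin K) (Fin K) ℝ)
    (U : ℝ → ℝ) (hU : ∀ k l, DifferentiableAt ℝ U (Θ k l))
    (c : ℝ) (hc : 0 < c) (hUc : ∀ k l, |deriv U (Θ k l)| ≤ c) :
    ∀ T ∈ UK N K,
      |∑ i, ∑ j, ∑ k, ∑ l, (MU i j - deriv U (Θ k l) * M i j) * T i k * T j l| ≤
        (1 / (N : ℝ)) * opNorm MU + c * ((K : ℝ) ^ 2 / N) * opNorm M := by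
  rintro T ⟨hT0, hT1⟩
  have hNpos : (0 : ℝ) < N := by exact_mod_cast hN
  have hTb : ∀ i k, |T i k| ≤ 1 / N := by
    intro i k
    rw [abs_of_nonneg (hT0 i k), ← hT1 i]
    exact Finset.single_le_sum (fun k _ => hT0 i k) (Finset.mem_univ k)
  have hone : ∀ i : Fin N, |(fun _ : Fin N => 1 / (N:ℝ)) i| ≤ 1 / N := by
    intro i; rw [abs_of_nonneg (by positivity)]
  set d : Fin K → Fin K → ℝ := fun k l => deriv U (Θ k l) with hd
  -- split
  have hsplit : ∑ i, ∑ j, ∑ k, ∑ l, (MU i j - d k l * M i j) * T i k * T j l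
      = (∑ i, ∑ j, MU i j * (fun _ : Fin N => 1/(N:ℝ)) j * (fun _ : Fin N => 1/(N:ℝ)) i)
        - ∑ p : Fin K × Fin K, d p.1 p.2 *
            ∑ i, ∑ j, M i j * (fun j => T j p.2) j * (fun i => T i p.1) i := by
    simp only [sub_mul, Finset.sum_sub_distrib]
    congr 1
    · refine Finset.sum_congr rfl fun i _ => Finset.sum_congr rfl fun j _ => ?_
      calc ∑ k, ∑ l, MU i j * T i k * T j l
          = MU i j * ((∑ k, T i k) * (∑ l, T j l)) := by
            rw [Finset.sum_mul_sum, Finset.mul_sum]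
            refine Finset.sum_congr rfl fun k _ => ?_
            rw [Finset.mul_sum]
            exact Finset.sum_congr rfl fun l _ => by ring
        _ = MU i j * (1/(N:ℝ)) * (1/(N:ℝ)) := by rw [hT1 i, hT1 j]; ring
    · calc ∑ i, ∑ j, ∑ k, ∑ l, d k l * M i j * T i k * T j l
          = ∑ i, ∑ j, ∑ p : Fin K × Fin K, d p.1 p.2 * M i j * T i p.1 * T j p.2 := by
            refine Finset.sum_congr rfl fun i _ => Finset.sum_congr rfl fun j _ => ?_
            exact (Fintype.sum_prod_type' _).symm
        _ = ∑ i, ∑ p : Fin K × Fin K, ∑ j, d p.1 p.2 * M i j * T i p.1 * T j p.2 :=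
            Finset.sum_congr rfl fun i _ => Finset.sum_comm
        _ = ∑ p : Fin K × Fin K, ∑ i, ∑ j, d p.1 p.2 * M i j * T i p.1 * T j p.2 :=
            Finset.sum_comm
        _ = ∑ p : Fin K × Fin K, d p.1 p.2 *
              ∑ i, ∑ j, M i j * (fun j => T j p.2) j * (fun i => T i p.1) i := by
            refine Finset.sum_congr rfl fun p _ => ?_
            rw [Finset.mul_sum]
            refine Finset.sum_congr rfl fun i _ => ?_
            rw [Finset.mul_sum]
            exact Finset.sum_congr rfl fun j _ => by ring
  rw [hsplit]
  have hA : |∑ i, ∑ j, MU i j * (fun _ : Fin N => 1/(N:ℝ)) j * (fun _ : Fin N => 1/(N:ℝ)) i|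
      ≤ opNorm MU * (1 / N) := quad_bound hN MU _ _ hone hone
  have hB : |∑ p : Fin K × Fin K, d p.1 p.2 *
        ∑ i, ∑ j, M i j * (fun j => T j p.2) j * (fun i => T i p.1) i|
      ≤ (K:ℝ)^2 * (c * (opNorm M * (1 / N))) := by
    calc |∑ p : Fin K × Fin K, d p.1 p.2 *
          ∑ i, ∑ j, M i j * (fun j => T j p.2) j * (fun i => T i p.1) i|
        ≤ ∑ p : Fin K × Fin K, |d p.1 p.2 *
            ∑ i, ∑ j, M i j * (fun j => T j p.2) j * (fun i => T i p.1) i| :=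
          Finset.abs_sum_le_sum_abs _ _
      _ ≤ ∑ _p : Fin K × Fin K, c * (opNorm M * (1 / N)) := by
          refine Finset.sum_le_sum fun p _ => ?_
          rw [abs_mul]
          exact mul_le_mul (hUc p.1 p.2)
            (quad_bound hN M _ _ (fun i => hTb i p.2) (fun i => hTb i p.1))
            (abs_nonneg _) (le_of_lt hc)
      _ = (K:ℝ)^2 * (c * (opNorm M * (1 / N))) := by
          rw [Finset.sum_const, Finset.card_univ, Fintype.card_prod, Fintype.card_fin,
            nsmul_eq_mul]
          push_cast
          ring
  calc |(∑ i, ∑ j, MU i j * (fun _ : Fin N => 1/(N:ℝ)) j * (fun _ : Fin N => 1/(N:ℝ)) i)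
        - ∑ p : Fin K × Fin K, d p.1 p.2 *
            ∑ i, ∑ j, M i j * (fun j => T j p.2) j * (fun i => T i p.1) i|
      ≤ _ + _ := abs_sub _ _
    _ ≤ opNorm MU * (1 / N) + (K:ℝ)^2 * (c * (opNorm M * (1 / N))) := add_le_add hA hB
    _ = (1 / (N : ℝ)) * opNorm MU + c * ((K : ℝ) ^ 2 / N) * opNorm M := by ring
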